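/- For any two projection operators f and g on a complex Hilbert space and any natural number N ≥ 1, ‖(f∘g + g∘f)^{2N}‖ ≤ 2·‖f∘g‖^{2N}·(1 + ‖f∘g‖)^{2N−1}. -/

import Mathlib

open ContinuousLinearMap

local notation "⟪" x ", " y "⟫" => @inner ℂ _ _ x y

/-- A self-adjoint operator whose quadratic form is bounded by `C * ‖x‖ ^ 2` has norm
at most `C`. -/
lemma aux_norm_le_of_forall_inner_le
    {H : Type*} [NormedAddCommGroup H] [InnerProductSpace ℂ H] [CompleteSpace H]
    (T : H →L[ℂ] H) (hT : adjoint T = T) {C : ℝ} (hC : 0 ≤ C)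
    (h : ∀ x : H, ‖⟪T x, x⟫‖ ≤ C * ‖x‖ ^ 2) : ‖T‖ ≤ C := by
  have hsym : ∀ u v : H, ⟪T u, v⟫ = ⟪u, T v⟫ := by
    intro u v
    conv_lhs => rw [← hT]
    exact adjoint_inner_left T v u
  -- polarization bound on the real part
  have key : ∀ x y : H, 4 * Complex.re ⟪T x, y⟫ ≤ 2 * C * (‖x‖ ^ 2 + ‖y‖ ^ 2) := by
    intro x y
    have hconj : ⟪T y, x⟫ = (starRingEnd ℂ) ⟪T x, y⟫ := by
      rw [hsym y x, ← inner_conj_symm]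
    have e : ⟪T (x + y), x + y⟫ - ⟪T (x - y), x - y⟫
        = 2 * (⟪T x, y⟫ + ⟪T y, x⟫) := by
      simp only [map_add, map_sub, inner_add_left, inner_add_right, inner_sub_left,
        inner_sub_right]
      ring
    have hre : Complex.re (⟪T (x + y), x + y⟫ - ⟪T (x - y), x - y⟫)
        = 4 * Complex.re ⟪T x, y⟫ := by
      rw [e, hconj]
      generalize ⟪T x, y⟫ = z
      simp [Complex.add_re, Complex.mul_re, Complex.conj_re, Complex.conj_im]
      ring
    have h1 : Complex.re (⟪T (x + y), x + y⟫ - ⟪T (x - y), x - y⟫)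
        ≤ C * ‖x + y‖ ^ 2 + C * ‖x - y‖ ^ 2 := by
      have a1 : Complex.re ⟪T (x + y), x + y⟫ ≤ C * ‖x + y‖ ^ 2 := by
        refine le_trans ?_ (h _)
        exact Complex.re_le_norm _
      have a2 : -(C * ‖x - y‖ ^ 2) ≤ Complex.re ⟪T (x - y), x - y⟫ := by
        have hb : |Complex.re ⟪T (x - y), x - y⟫| ≤ C * ‖x - y‖ ^ 2 := by
          refine le_trans ?_ (h _)
          exact Complex.abs_re_le_norm _
        linarith [(abs_le.mp hb).1]
      rw [Complex.sub_re]
      linarith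
    have hpar : ‖x + y‖ ^ 2 + ‖x - y‖ ^ 2 = 2 * (‖x‖ ^ 2 + ‖y‖ ^ 2) := by
      have := parallelogram_law_with_norm ℂ x y
      nlinarith [this]
    rw [← hre]
    nlinarith [h1, hpar, sq_nonneg (‖x + y‖), sq_nonneg (‖x - y‖)]
  refine T.opNorm_le_bound hC fun x => ?_
  rcases eq_or_ne (T x) 0 with h0 | h0
  · simp [h0]
    positivity
  · have hTx : 0 < ‖T x‖ := norm_pos_iff.mpr h0
    have hx : 0 < ‖x‖ := by
      rcases eq_or_lt_of_le (norm_nonneg x) with he | hl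
      · exfalso; apply h0
        have : x = 0 := norm_eq_zero.mp he.symm
        simp [this]
      · exact hl
    set y : H := ((‖x‖ / ‖T x‖ : ℝ) : ℂ) • T x with hy
    have hinner : Complex.re ⟪T x, y⟫ = (‖x‖ / ‖T x‖) * ‖T x‖ ^ 2 := by
      rw [hy, inner_smul_right]
      have hz1 : (⟪T x, T x⟫).re = ‖T x‖ ^ 2 := by
        rw [← RCLike.re_to_complex]
        exact inner_self_eq_norm_sq (𝕜 := ℂ) _
      have hz2 : (⟪T x, T x⟫).im = 0 := by
        rw [← RCLike.im_to_complex]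
        exact inner_self_im (𝕜 := ℂ) _
      rw [Complex.mul_re, hz1, hz2, Complex.ofReal_re, Complex.ofReal_im]
      ring
    have hny : ‖y‖ = ‖x‖ := by
      rw [hy, norm_smul]
      simp [abs_of_nonneg (div_nonneg hx.le hTx.le), div_mul_cancel₀, hTx.ne']
    have := key x y
    rw [hinner, hny] at this
    have hq : (‖x‖ / ‖T x‖) * ‖T x‖ ^ 2 = ‖x‖ * ‖T x‖ := by
      field_simp
    rw [hq] at this
    nlinarith [this, hx, hTx]

set_option maxHeartbeats 1000000 in
theorem anticommutator_even_pow_norm_le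
    {H : Type*} [NormedAddCommGroup H] [InnerProductSpace ℂ H] [CompleteSpace H]
    (f g : H →L[ℂ] H)
    (hf : f ∘L f = f) (hf' : adjoint f = f)
    (hg : g ∘L g = g) (hg' : adjoint g = g)
    (N : ℕ) (hN : 1 ≤ N) :
    ‖(f ∘L g + g ∘L f) ^ (2 * N)‖ ≤
      2 * ‖f ∘L g‖ ^ (2 * N) * (1 + ‖f ∘L g‖) ^ (2 * N - 1) := by
  set a : H →L[ℂ] H := f ∘L g with ha
  set A : H →L[ℂ] H := f ∘L g + g ∘L f with hA
  set s : H →L[ℂ] H := f + g with hs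
  set t : ℝ := ‖a‖ with ht
  have ht0 : 0 ≤ t := norm_nonneg _
  -- norms of projections are at most 1
  have hf1 : ‖f‖ ≤ 1 := by
    have := norm_adjoint_comp_self f
    rw [hf', hf] at this
    nlinarith [norm_nonneg f]
  have hg1 : ‖g‖ ≤ 1 := by
    have := norm_adjoint_comp_self g
    rw [hg', hg] at this
    nlinarith [norm_nonneg g]
  have ht1 : t ≤ 1 := by
    calc t ≤ ‖f‖ * ‖g‖ := opNorm_comp_le f g
    _ ≤ 1 := by nlinarith [norm_nonneg f, norm_nonneg g]
  -- A is self-adjoint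
  have hA' : adjoint A = A := by
    rw [hA, map_add, adjoint_comp, adjoint_comp, hf', hg', add_comm]
  -- f and g move across the inner product
  have hfm : ∀ u v : H, ⟪f u, v⟫ = ⟪u, f v⟫ := by
    intro u v; conv_lhs => rw [← hf']
    exact adjoint_inner_left f v u
  have hgm : ∀ u v : H, ⟪g u, v⟫ = ⟪u, g v⟫ := by
    intro u v; conv_lhs => rw [← hg']
    exact adjoint_inner_left g v u
  -- idempotency pointwise
  have hfp : ∀ u : H, f (f u) = f u := fun u => by
    rw [← ContinuousLinearMap.comp_apply, hf]
  have hgp : ∀ u : H, g (g u) = g u := fun u => by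
    rw [← ContinuousLinearMap.comp_apply, hg]
  -- quadratic form bound for A
  have hquad : ∀ x : H, ‖⟪A x, x⟫‖ ≤ (t * ‖s‖) * ‖x‖ ^ 2 := by
    intro x
    have e1 : ⟪(f ∘L g) x, x⟫ = ⟪g x, f x⟫ := by
      show ⟪f (g x), x⟫ = _
      rw [hfm]
    have e2 : ⟪(g ∘L f) x, x⟫ = ⟪f x, g x⟫ := by
      show ⟪g (f x), x⟫ = _
      rw [hgm]
    have b1 : ‖⟪g x, f x⟫‖ ≤ t * (‖g x‖ * ‖f x‖) := by
      have : ⟪g x, f x⟫ = ⟪a (g x), f x⟫ := by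
        show _ = ⟪f (g (g x)), f x⟫
        rw [hgp, hfm, hfp]
      rw [this]
      calc ‖⟪a (g x), f x⟫‖ ≤ ‖a (g x)‖ * ‖f x‖ := norm_inner_le_norm _ _
        _ ≤ (t * ‖g x‖) * ‖f x‖ :=
          mul_le_mul_of_nonneg_right (a.le_opNorm _) (norm_nonneg _)
        _ = t * (‖g x‖ * ‖f x‖) := by ring
    have b2 : ‖⟪f x, g x⟫‖ ≤ t * (‖g x‖ * ‖f x‖) := by
      rw [← inner_conj_symm]
      rw [RCLike.norm_conj]
      exact b1
    have hAx : ⟪A x, x⟫ = ⟪g x, f x⟫ + ⟪f x, g x⟫ := by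
      rw [hA]
      rw [ContinuousLinearMap.add_apply, inner_add_left, e1, e2]
    have step1 : ‖⟪A x, x⟫‖ ≤ 2 * t * (‖g x‖ * ‖f x‖) := by
      rw [hAx]
      calc ‖⟪g x, f x⟫ + ⟪f x, g x⟫‖ ≤ ‖⟪g x, f x⟫‖ + ‖⟪f x, g x⟫‖ := norm_add_le _ _
        _ ≤ 2 * t * (‖g x‖ * ‖f x‖) := by linarith
    -- ‖f x‖ ^ 2 + ‖g x‖ ^ 2 = re ⟪s x, x⟫ ≤ ‖s‖ * ‖x‖ ^ 2
    have hsx : ⟪s x, x⟫ = ⟪f x, f x⟫ + ⟪g x, g x⟫ := by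
      rw [hs, ContinuousLinearMap.add_apply, inner_add_left]
      have e3 : ⟪f x, x⟫ = ⟪f x, f x⟫ := by
        conv_lhs => rw [← hfp x]
        rw [hfm]
      have e4 : ⟪g x, x⟫ = ⟪g x, g x⟫ := by
        conv_lhs => rw [← hgp x]
        rw [hgm]
      rw [e3, e4]
    have hsum : ‖f x‖ ^ 2 + ‖g x‖ ^ 2 ≤ ‖s‖ * ‖x‖ ^ 2 := by
      have h5 : ‖⟪s x, x⟫‖ = ‖f x‖ ^ 2 + ‖g x‖ ^ 2 := by
        rw [hsx, inner_self_eq_norm_sq_to_K, inner_self_eq_norm_sq_to_K,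
          ← RCLike.ofReal_pow, ← RCLike.ofReal_pow, ← RCLike.ofReal_add,
          RCLike.norm_ofReal]
        exact abs_of_nonneg (by positivity)
      calc ‖f x‖ ^ 2 + ‖g x‖ ^ 2 = ‖⟪s x, x⟫‖ := h5.symm
        _ ≤ ‖s x‖ * ‖x‖ := norm_inner_le_norm _ _
        _ ≤ (‖s‖ * ‖x‖) * ‖x‖ :=
          mul_le_mul_of_nonneg_right (s.le_opNorm _) (norm_nonneg _)
        _ = ‖s‖ * ‖x‖ ^ 2 := by ring
    calc ‖⟪A x, x⟫‖ ≤ 2 * t * (‖g x‖ * ‖f x‖) := step1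
      _ ≤ t * (‖f x‖ ^ 2 + ‖g x‖ ^ 2) := by nlinarith [sq_nonneg (‖f x‖ - ‖g x‖)]
      _ ≤ (t * ‖s‖) * ‖x‖ ^ 2 := by nlinarith [hsum]
  have hAs : ‖A‖ ≤ t * ‖s‖ :=
    aux_norm_le_of_forall_inner_le A hA'
      (mul_nonneg ht0 (norm_nonneg _)) hquad
  -- s ∘L s = s + A
  have hss : s ∘L s = s + A := by
    rw [hs, hA, add_comp, comp_add, comp_add, hf, hg]
    abel
  have hsnorm : ‖s‖ ≤ 1 + t := by
    have h6 : ‖s‖ * ‖s‖ = ‖s ∘L s‖ := by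
      have := norm_adjoint_comp_self s
      have hs' : adjoint s = s := by rw [hs, map_add, hf', hg']
      rw [hs'] at this
      linarith
    have h7 : ‖s ∘L s‖ ≤ ‖s‖ + ‖A‖ := by
      rw [hss]; exact norm_add_le _ _
    have h8 : ‖s‖ * ‖s‖ ≤ ‖s‖ + t * ‖s‖ := by linarith [hAs]
    nlinarith [norm_nonneg s]
  have hAfinal : ‖A‖ ≤ t * (1 + t) := by
    calc ‖A‖ ≤ t * ‖s‖ := hAs
      _ ≤ t * (1 + t) := mul_le_mul_of_nonneg_left hsnorm ht0
  -- finish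
  have hpow : ‖A ^ (2 * N)‖ ≤ ‖A‖ ^ (2 * N) :=
    norm_pow_le' A (by omega)
  have h2N : 2 * N = (2 * N - 1) + 1 := by omega
  calc ‖A ^ (2 * N)‖ ≤ ‖A‖ ^ (2 * N) := hpow
    _ ≤ (t * (1 + t)) ^ (2 * N) :=
      pow_le_pow_left₀ (norm_nonneg A) hAfinal _
    _ = t ^ (2 * N) * ((1 + t) ^ (2 * N - 1) * (1 + t)) := by
      rw [mul_pow]
      congr 1
      conv_lhs => rw [h2N]
      rw [pow_succ]
    _ ≤ 2 * t ^ (2 * N) * (1 + t) ^ (2 * N - 1) := by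
      have hbase : (0:ℝ) ≤ (1 + t) ^ (2 * N - 1) := by positivity
      have htp : (0:ℝ) ≤ t ^ (2 * N) := by positivity
      nlinarith [mul_nonneg htp hbase]
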